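/- arXiv:2003.00534 — 5 statements merged into one kernel-verified Lean document; each statement's English description precedes it below -/
import Mathlib

section
/- (Pushback property of KL divergence) Let Δ be the probability simplex in ℝ^d and f : Δ → ℝ a concave function. Fix y in the interior of Δ and α > 0. If x* maximizes x ↦ f(x) - α⁻¹·D(x‖y) over Δ, where D denotes KL divergence, then for every z ∈ Δ: f(x*) - α⁻¹·D(x*‖y) ≥ f(z) - α⁻¹·D(z‖y) + α⁻¹·D(z‖x*). -/
open Finset

/-- The probability simplex in `ℝ^d`. -/
def simplex (d : ℕ) : Set (Fin d → ℝ) :=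
  {x | (∀ i, 0 ≤ x i) ∧ ∑ i, x i = 1}

/-- KL divergence on `ℝ^d` (with the convention `0 · log 0 = 0`, via `log 0 = 0`). -/
noncomputable def klDiv {d : ℕ} (p q : Fin d → ℝ) : ℝ :=
  ∑ i, p i * Real.log (p i / q i)

private lemma mul_log_div_eq (x y : ℝ) (hx : 0 ≤ x) (hy : 0 < y) :
    x * Real.log (x / y) = x * Real.log x - x * Real.log y := by
  rcases eq_or_lt_of_le hx with h | h
  · simp [← h]
  · rw [Real.log_div h.ne' hy.ne']; ring

private lemma tangent_ineq (u v y : ℝ) (hu : 0 ≤ u) (hv : 0 < v) (hy : 0 < y) :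
    v * Real.log (v / y) + (u - v) * (Real.log (v / y) + 1) ≤ u * Real.log (u / y) := by
  rcases eq_or_lt_of_le hu with h | h
  · rw [← h]; simp; nlinarith [hv]
  · have h1 : Real.log (v / u) ≤ v / u - 1 := Real.log_le_sub_one_of_pos (by positivity)
    have h2 : u * Real.log (v / u) ≤ u * (v / u - 1) := by
      exact mul_le_mul_of_nonneg_left h1 h.le
    have h3 : u * (v / u - 1) = v - u := by field_simp
    rw [Real.log_div hv.ne' hy.ne', Real.log_div h.ne' hy.ne']
    rw [Real.log_div hv.ne' h.ne'] at h2
    nlinarith [h2, h3]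

private lemma chord_ineq (u w y t : ℝ) (hu : 0 ≤ u) (hw : 0 ≤ w) (hy : 0 < y)
    (ht0 : 0 ≤ t) (ht1 : t ≤ 1) :
    ((1 - t) * u + t * w) * Real.log (((1 - t) * u + t * w) / y)
      ≤ (1 - t) * (u * Real.log (u / y)) + t * (w * Real.log (w / y)) := by
  have hcomb : 0 ≤ (1 - t) * u + t * w := by nlinarith
  have hc := Real.convexOn_mul_log.2 (Set.mem_Ici.2 hu) (Set.mem_Ici.2 hw)
    (by linarith : (0:ℝ) ≤ 1 - t) ht0 (by ring)
  simp only [smul_eq_mul] at hc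
  rw [mul_log_div_eq _ _ hcomb hy, mul_log_div_eq _ _ hu hy, mul_log_div_eq _ _ hw hy]
  nlinarith [hc]

/-- Pushback property of the KL divergence: if `x⋆` maximizes
`x ↦ f x - α⁻¹ D(x‖y)` over the simplex, with `f` concave and `y` interior, then for
every `z` in the simplex,
`f x⋆ - α⁻¹ D(x⋆‖y) ≥ f z - α⁻¹ D(z‖y) + α⁻¹ D(z‖x⋆)`. -/
theorem kl_pushback {d : ℕ} (f : (Fin d → ℝ) → ℝ) (y xstar : Fin d → ℝ) (α : ℝ)
    (hα : 0 < α)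
    (hf : ConcaveOn ℝ (simplex d) f)
    (hy : y ∈ simplex d) (hypos : ∀ i, 0 < y i)
    (hxstar : xstar ∈ simplex d)
    (hmax : ∀ x ∈ simplex d, f x - α⁻¹ * klDiv x y ≤ f xstar - α⁻¹ * klDiv xstar y) :
    ∀ z ∈ simplex d,
      f xstar - α⁻¹ * klDiv xstar y ≥ f z - α⁻¹ * klDiv z y + α⁻¹ * klDiv z xstar := by
  intro z hz
  obtain ⟨hy0, hy1⟩ := hy
  obtain ⟨hx0, hx1⟩ := hxstar
  obtain ⟨hz0, hz1⟩ := hz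
  -- convex combinations stay in the simplex
  have hmem : ∀ (w : Fin d → ℝ), w ∈ simplex d → ∀ t : ℝ, 0 ≤ t → t ≤ 1 →
      (fun i => (1 - t) * xstar i + t * w i) ∈ simplex d := by
    rintro w ⟨hw0, hw1⟩ t ht0 ht1
    refine ⟨fun i => ?_, ?_⟩
    · show 0 ≤ (1 - t) * xstar i + t * w i
      nlinarith [hx0 i, hw0 i]
    rw [Finset.sum_add_distrib, ← Finset.mul_sum, ← Finset.mul_sum, hx1, hw1]; ring
  -- concavity along segments
  have hconc : ∀ (w : Fin d → ℝ), w ∈ simplex d → ∀ t : ℝ, 0 ≤ t → t ≤ 1 →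
      (1 - t) * f xstar + t * f w ≤ f (fun i => (1 - t) * xstar i + t * w i) := by
    intro w hw t ht0 ht1
    have h := hf.2 ⟨hx0, hx1⟩ hw (by linarith : (0:ℝ) ≤ 1 - t) ht0 (by ring)
    simp only [smul_eq_mul] at h
    have he : (fun i => (1 - t) * xstar i + t * w i) = (1 - t) • xstar + t • w := by
      funext i; simp [smul_eq_mul]
    rw [he]
    exact h
  -- Step A: xstar is strictly positive
  have hxpos : ∀ i, 0 < xstar i := by
    intro j
    rcases (hx0 j).lt_or_eq with h | h
    · exact h
    exfalso
    have hj : xstar j = 0 := h.symm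
    set K : ℝ := α * (f y - f xstar) + klDiv xstar y - 1 with hK
    set t : ℝ := min (1/2) (Real.exp (K / y j)) with htdef
    have ht0 : 0 < t := lt_min (by norm_num) (Real.exp_pos _)
    have ht1 : t < 1 := lt_of_le_of_lt (min_le_left _ _) (by norm_num)
    set xt : Fin d → ℝ := fun i => (1 - t) * xstar i + t * y i with hxt
    have hxtmem := hmem y ⟨hy0, hy1⟩ t ht0.le ht1.le
    -- upper bound on klDiv xt y
    have hchord : ∀ i, xt i * Real.log (xt i / y i)
        ≤ (1 - t) * (xstar i * Real.log (xstar i / y i)) := by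
      intro i
      have := chord_ineq (xstar i) (y i) (y i) t (hx0 i) (hy0 i) (hypos i) ht0.le ht1.le
      simpa [div_self (hypos i).ne'] using this
    have hjval : xt j * Real.log (xt j / y j) = t * y j * Real.log t := by
      have hxtj : xt j = t * y j := by simp [hxt, hj]
      rw [hxtj, mul_div_assoc, div_self (hypos j).ne', mul_one]
    have hjzero : xstar j * Real.log (xstar j / y j) = 0 := by simp [hj]
    have e1 : klDiv xt y = xt j * Real.log (xt j / y j)
        + ∑ i ∈ Finset.univ.erase j, xt i * Real.log (xt i / y i) := by
      rw [klDiv]; exact (Finset.add_sum_erase _ _ (Finset.mem_univ j)).symm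
    have e2 : klDiv xstar y = xstar j * Real.log (xstar j / y j)
        + ∑ i ∈ Finset.univ.erase j, xstar i * Real.log (xstar i / y i) := by
      rw [klDiv]; exact (Finset.add_sum_erase _ _ (Finset.mem_univ j)).symm
    have hub : klDiv xt y ≤ t * y j * Real.log t + (1 - t) * klDiv xstar y := by
      have hsum : ∑ i ∈ Finset.univ.erase j, xt i * Real.log (xt i / y i)
          ≤ (1 - t) * ∑ i ∈ Finset.univ.erase j, xstar i * Real.log (xstar i / y i) := by
        rw [Finset.mul_sum]
        exact Finset.sum_le_sum fun i _ => hchord i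
      rw [e1, hjval]
      have : (1 - t) * klDiv xstar y
          = (1 - t) * ∑ i ∈ Finset.univ.erase j, xstar i * Real.log (xstar i / y i) := by
        rw [e2, hjzero]; ring
      linarith
    -- combine with maximality and concavity
    have hmx := hmax xt hxtmem
    have hcc := hconc y ⟨hy0, hy1⟩ t ht0.le ht1.le
    have hstep : t * (f y - f xstar) ≤ α⁻¹ * (klDiv xt y - klDiv xstar y) := by
      have : f xt - f xstar ≤ α⁻¹ * klDiv xt y - α⁻¹ * klDiv xstar y := by linarith
      nlinarith [this, hcc]
    have hstep2 : α * t * (f y - f xstar) ≤ klDiv xt y - klDiv xstar y := by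
      have h2 := mul_le_mul_of_nonneg_left hstep hα.le
      rwa [mul_inv_cancel_left₀ hα.ne', ← mul_assoc] at h2
    have hstep3 : t * (α * (f y - f xstar)) ≤ t * (y j * Real.log t - klDiv xstar y) := by
      nlinarith [hstep2, hub]
    have hstep4 : α * (f y - f xstar) ≤ y j * Real.log t - klDiv xstar y :=
      (mul_le_mul_iff_right₀ ht0).mp hstep3
    have hlogt : Real.log t ≤ K / y j := by
      calc Real.log t ≤ Real.log (Real.exp (K / y j)) := by
            apply Real.log_le_log ht0 (min_le_right _ _)
        _ = K / y j := Real.log_exp _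
    have hylogt : y j * Real.log t ≤ K := by
      have := mul_le_mul_of_nonneg_left hlogt (hypos j).le
      rwa [mul_div_cancel₀ _ (hypos j).ne'] at this
    rw [hK] at hylogt
    linarith
  -- Step B: the key inequality for all t ∈ (0,1)
  have main : ∀ t : ℝ, 0 < t → t < 1 →
      ∑ i, (xstar i - z i) * Real.log (((1 - t) * xstar i + t * z i) / y i)
        ≤ α * (f xstar - f z) := by
    intro t ht0 ht1
    set xt : Fin d → ℝ := fun i => (1 - t) * xstar i + t * z i with hxt
    have hxtpos : ∀ i, 0 < xt i := by
      intro i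
      have := hxpos i
      have := hz0 i
      simp only [hxt]
      nlinarith
    have hxtmem := hmem z ⟨hz0, hz1⟩ t ht0.le ht1.le
    have htan : klDiv xt y + ∑ i, (xstar i - xt i) * (Real.log (xt i / y i) + 1)
        ≤ klDiv xstar y := by
      rw [klDiv, klDiv, ← Finset.sum_add_distrib]
      exact Finset.sum_le_sum fun i _ =>
        tangent_ineq (xstar i) (xt i) (y i) (hx0 i) (hxtpos i) (hypos i)
    have hsum : ∑ i, (xstar i - xt i) * (Real.log (xt i / y i) + 1)
        = t * ∑ i, (xstar i - z i) * Real.log (xt i / y i) := by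
      have he : ∀ i, (xstar i - xt i) * (Real.log (xt i / y i) + 1)
          = t * ((xstar i - z i) * Real.log (xt i / y i)) + t * (xstar i - z i) := by
        intro i; simp only [hxt]; ring
      rw [Finset.sum_congr rfl fun i _ => he i, Finset.sum_add_distrib,
        ← Finset.mul_sum, ← Finset.mul_sum, Finset.sum_sub_distrib, hx1, hz1]
      ring
    have hmx := hmax xt hxtmem
    have hcc := hconc z ⟨hz0, hz1⟩ t ht0.le ht1.le
    have hstep : t * (f z - f xstar) ≤ α⁻¹ * (klDiv xt y - klDiv xstar y) := by
      have : f xt - f xstar ≤ α⁻¹ * klDiv xt y - α⁻¹ * klDiv xstar y := by linarith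
      nlinarith [this, hcc]
    have hstep2 : α * t * (f z - f xstar) ≤ klDiv xt y - klDiv xstar y := by
      have h2 := mul_le_mul_of_nonneg_left hstep hα.le
      rwa [mul_inv_cancel_left₀ hα.ne', ← mul_assoc] at h2
    have hstep3 : t * (α * (f z - f xstar))
        ≤ t * (-(∑ i, (xstar i - z i) * Real.log (xt i / y i))) := by
      nlinarith [hstep2, htan, hsum]
    have hstep4 : α * (f z - f xstar)
        ≤ -(∑ i, (xstar i - z i) * Real.log (xt i / y i)) :=
      (mul_le_mul_iff_right₀ ht0).mp hstep3
    have : ∑ i, (xstar i - z i) * Real.log (xt i / y i) ≤ α * (f xstar - f z) := by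
      nlinarith [hstep4]
    simpa only [hxt] using this
  -- take the limit t → 0⁺
  have limit : ∑ i, (xstar i - z i) * Real.log (xstar i / y i) ≤ α * (f xstar - f z) := by
    have htend : Filter.Tendsto
        (fun t : ℝ => ∑ i, (xstar i - z i) * Real.log (((1 - t) * xstar i + t * z i) / y i))
        (nhdsWithin 0 (Set.Ioi 0))
        (nhds (∑ i, (xstar i - z i) * Real.log (xstar i / y i))) := by
      apply Filter.Tendsto.mono_left _ nhdsWithin_le_nhds
      apply tendsto_finset_sum
      intro i _
      apply Filter.Tendsto.const_mul
      have hcont : Continuous fun t : ℝ => ((1 - t) * xstar i + t * z i) / y i := by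
        fun_prop
      have h1 : Filter.Tendsto (fun t : ℝ => ((1 - t) * xstar i + t * z i) / y i)
          (nhds 0) (nhds (xstar i / y i)) := by
        have := hcont.tendsto 0
        simpa using this
      exact h1.log (ne_of_gt (div_pos (hxpos i) (hypos i)))
    have hev : ∀ᶠ t in nhdsWithin 0 (Set.Ioi 0),
        ∑ i, (xstar i - z i) * Real.log (((1 - t) * xstar i + t * z i) / y i)
          ≤ α * (f xstar - f z) := by
      have hmem01 : Set.Ioo (0:ℝ) 1 ∈ nhdsWithin 0 (Set.Ioi 0) :=
        Ioo_mem_nhdsGT_of_mem ⟨le_refl 0, one_pos⟩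
      exact Filter.eventually_of_mem hmem01 fun t ht => main t ht.1 ht.2
    exact le_of_tendsto htend hev
  -- three-point identity
  have ident : klDiv xstar y - klDiv z y + klDiv z xstar
      = ∑ i, (xstar i - z i) * Real.log (xstar i / y i) := by
    rw [klDiv, klDiv, klDiv, ← Finset.sum_sub_distrib, ← Finset.sum_add_distrib]
    apply Finset.sum_congr rfl
    intro i _
    rcases (hz0 i).lt_or_eq with h | h
    · rw [Real.log_div h.ne' (hypos i).ne', Real.log_div h.ne' (hxpos i).ne',
        Real.log_div (hxpos i).ne' (hypos i).ne']
      ring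
    · simp [← h]
  rw [← ident] at limit
  have h2 := mul_le_mul_of_nonneg_left limit (inv_pos.mpr hα).le
  rw [← mul_assoc, inv_mul_cancel₀ hα.ne', one_mul] at h2
  rw [mul_add, mul_sub] at h2
  rw [ge_iff_le]
  linarith
end

section
/- (Elliptical potential lemma) Let (φ_i)_{i≥1} be vectors in ℝ^d with ‖φ_i‖₂ ≤ 1, and Λ₀ a positive definite matrix with smallest eigenvalue λ_min(Λ₀) ≥ 1. Define Λ_t = Λ₀ + ∑_{i=1}^{t-1} φ_i φ_iᵀ. Then for every t ≥ 1: log(det(Λ_{t+1})/det(Λ₁)) ≤ ∑_{i=1}^{t} φ_iᵀ Λ_i⁻¹ φ_i ≤ 2·log(det(Λ_{t+1})/det(Λ₁)). -/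
open Finset Matrix

private lemma ep_sum_mulVec {ι m n : Type*} [Fintype n] [DecidableEq ι]
    (s : Finset ι) (M : ι → Matrix m n ℝ) (v : n → ℝ) :
    (∑ i ∈ s, M i) *ᵥ v = ∑ i ∈ s, (M i *ᵥ v) := by
  classical
  induction s using Finset.induction with
  | empty => ext j; simp [mulVec, dotProduct]
  | insert _ _ h ih =>
    rw [Finset.sum_insert h, Finset.sum_insert h, add_mulVec, ih]

private lemma ep_dotProduct_sum {ι n : Type*} [Fintype n] [DecidableEq ι]
    (s : Finset ι) (v : n → ℝ) (w : ι → (n → ℝ)) :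
    v ⬝ᵥ (∑ i ∈ s, w i) = ∑ i ∈ s, v ⬝ᵥ w i := by
  classical
  induction s using Finset.induction with
  | empty => simp
  | insert _ _ h ih => rw [Finset.sum_insert h, Finset.sum_insert h, dotProduct_add, ih]

private lemma ep_vecMulVec_quad {d : ℕ} (u v : Fin d → ℝ) :
    v ⬝ᵥ (vecMulVec u u *ᵥ v) = (u ⬝ᵥ v) ^ 2 := by
  have h1 : vecMulVec u u *ᵥ v = (u ⬝ᵥ v) • u := by
    ext i
    simp only [mulVec, dotProduct, vecMulVec_apply, Pi.smul_apply, smul_eq_mul,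
      Finset.sum_mul]
    exact Finset.sum_congr rfl fun j _ => by ring
  rw [h1, dotProduct_smul, smul_eq_mul, dotProduct_comm, sq]

private lemma ep_half_le_log {x : ℝ} (h0 : 0 ≤ x) (h1 : x ≤ 1) :
    x ≤ 2 * Real.log (1 + x) := by
  have he2 : Real.exp (1 / 2) * Real.exp (1 / 2) = Real.exp 1 := by
    rw [← Real.exp_add]; norm_num
  have he : Real.exp (1 / 2) ≤ 2 := by
    nlinarith [Real.exp_one_lt_d9, Real.exp_pos (1 / 2)]
  have hc := convexOn_exp.2 (Set.mem_univ (0 : ℝ)) (Set.mem_univ ((1 : ℝ) / 2))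
    (by linarith : (0 : ℝ) ≤ 1 - x) h0 (by ring : (1 - x) + x = 1)
  simp only [smul_eq_mul, mul_zero, zero_add, Real.exp_zero, mul_one] at hc
  have hexp : Real.exp (x / 2) ≤ 1 + x := by
    have : x * (1 / 2) = x / 2 := by ring
    rw [this] at hc
    nlinarith
  have := (Real.le_log_iff_exp_le (by linarith : (0 : ℝ) < 1 + x)).2 hexp
  linarith

/-- Elliptical potential lemma. `φ i` (for `i ≥ 1`) are vectors with `‖φ i‖₂ ≤ 1`,
`Λ₀` is positive definite with smallest eigenvalue at least `1` (expressed as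
`vᵀ Λ₀ v ≥ ‖v‖²` for all `v`), and `Λ t = Λ₀ + ∑_{i=1}^{t-1} φ_i φ_iᵀ`. Then for
every `t ≥ 1`,
`log(det Λ_{t+1} / det Λ₁) ≤ ∑_{i=1}^t φ_iᵀ Λ_i⁻¹ φ_i ≤ 2 log(det Λ_{t+1} / det Λ₁)`. -/
theorem elliptical_potential {d : ℕ} (hd : 1 ≤ d)
    (φ : ℕ → (Fin d → ℝ)) (Λ₀ : Matrix (Fin d) (Fin d) ℝ)
    (hφ : ∀ i, φ i ⬝ᵥ φ i ≤ 1)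
    (hΛ₀ : Λ₀.PosDef)
    (hmin : ∀ v : Fin d → ℝ, v ⬝ᵥ v ≤ v ⬝ᵥ (Λ₀ *ᵥ v))
    (Λ : ℕ → Matrix (Fin d) (Fin d) ℝ)
    (hΛ : ∀ t, Λ t = Λ₀ + ∑ i ∈ Finset.Ico 1 t, vecMulVec (φ i) (φ i)) :
    ∀ t : ℕ, 1 ≤ t →
      Real.log ((Λ (t + 1)).det / (Λ 1).det)
          ≤ ∑ i ∈ Finset.Icc 1 t, φ i ⬝ᵥ ((Λ i)⁻¹ *ᵥ φ i) ∧
      ∑ i ∈ Finset.Icc 1 t, φ i ⬝ᵥ ((Λ i)⁻¹ *ᵥ φ i)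
          ≤ 2 * Real.log ((Λ (t + 1)).det / (Λ 1).det) := by
  set x : ℕ → ℝ := fun i => φ i ⬝ᵥ ((Λ i)⁻¹ *ᵥ φ i) with hxdef
  -- quadratic lower bound for all Λ t
  have hquad : ∀ t (v : Fin d → ℝ), v ⬝ᵥ v ≤ v ⬝ᵥ (Λ t *ᵥ v) := by
    intro t v
    rw [hΛ t, add_mulVec, dotProduct_add, ep_sum_mulVec, ep_dotProduct_sum]
    have hnn : 0 ≤ ∑ i ∈ Finset.Ico 1 t, v ⬝ᵥ (vecMulVec (φ i) (φ i) *ᵥ v) := by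
      apply Finset.sum_nonneg
      intro i _
      rw [ep_vecMulVec_quad]
      positivity
    linarith [hmin v]
  -- Hermitian
  have hherm : ∀ t, (Λ t).IsHermitian := by
    intro t
    rw [hΛ t]
    apply hΛ₀.1.add
    apply Finset.sum_induction _ Matrix.IsHermitian
      (fun a b ha hb => ha.add hb) Matrix.isHermitian_zero
    intro i _
    ext a b
    simp [Matrix.conjTranspose_apply, vecMulVec_apply, mul_comm]
  -- Pos def
  have hpos : ∀ t, (Λ t).PosDef := by
    intro t
    refine Matrix.PosDef.of_dotProduct_mulVec_pos (hherm t) fun v hv => ?_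
    have h0 : 0 < v ⬝ᵥ v := by
      rcases lt_or_eq_of_le (Finset.sum_nonneg fun i _ => mul_self_nonneg (v i)) with h | h
      · exact h
      · exact absurd (dotProduct_self_eq_zero.1 h.symm) hv
    have := hquad t v
    simpa using lt_of_lt_of_le h0 this
  have hunit : ∀ t, IsUnit (Λ t).det := fun t =>
    isUnit_iff_ne_zero.2 (hpos t).det_pos.ne'
  -- bounds on x i
  have hxb : ∀ i, 0 ≤ x i ∧ x i ≤ 1 := by
    intro i
    set u : Fin d → ℝ := (Λ i)⁻¹ *ᵥ φ i with hu
    have hAu : Λ i *ᵥ u = φ i := by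
      rw [hu, mulVec_mulVec, Matrix.mul_nonsing_inv _ (hunit i), one_mulVec]
    have h1 : x i = u ⬝ᵥ (Λ i *ᵥ u) := by
      rw [hAu, dotProduct_comm]
    have h2 : u ⬝ᵥ u ≤ x i := by rw [h1]; exact hquad i u
    have hunn : 0 ≤ u ⬝ᵥ u := Finset.sum_nonneg fun j _ => mul_self_nonneg (u j)
    have h0 : 0 ≤ x i := le_trans hunn h2
    refine ⟨h0, ?_⟩
    have hCS : (x i) ^ 2 ≤ (φ i ⬝ᵥ φ i) * (u ⬝ᵥ u) := by
      have hcs := Finset.sum_mul_sq_le_sq_mul_sq Finset.univ (φ i) u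
      have e1 : (∑ j, φ i j ^ 2) = φ i ⬝ᵥ φ i := by simp [dotProduct, sq]
      have e2 : (∑ j, u j ^ 2) = u ⬝ᵥ u := by simp [dotProduct, sq]
      have e3 : (∑ j, φ i j * u j) = x i := rfl
      rw [e1, e2, e3] at hcs
      exact hcs
    have hmul : (φ i ⬝ᵥ φ i) * (u ⬝ᵥ u) ≤ u ⬝ᵥ u :=
      mul_le_of_le_one_left hunn (hφ i)
    nlinarith
  -- determinant recurrence
  have hdetstep : ∀ i, 1 ≤ i → (Λ (i + 1)).det = (Λ i).det * (1 + x i) := by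
    intro i hi
    have hsplit : Λ (i + 1) = Λ i + vecMulVec (φ i) (φ i) := by
      rw [hΛ, hΛ, Finset.sum_Ico_succ_top hi, ← add_assoc]
    rw [hsplit, vecMulVec_eq (Fin 1), Matrix.det_add_replicateCol_mul_replicateRow (hunit i)]
    congr 1
    simp only [Matrix.det_unique, Matrix.add_apply, Matrix.one_apply_eq]
    rw [← Matrix.replicateRow_vecMul, Matrix.replicateRow_mul_replicateCol_apply, ← dotProduct_mulVec]
  -- product formula
  have hprod : ∀ s, 1 ≤ s →
      (Λ (s + 1)).det = (Λ 1).det * ∏ i ∈ Finset.Icc 1 s, (1 + x i) := by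
    intro s hs
    induction s, hs using Nat.le_induction with
    | base => simp [hdetstep 1 le_rfl]
    | succ n hn ih =>
      conv_rhs => rw [← Finset.Ico_add_one_right_eq_Icc,
        Finset.prod_Ico_succ_top (by omega : 1 ≤ n + 1), Finset.Ico_add_one_right_eq_Icc]
      rw [hdetstep (n + 1) (by omega), ih]
      ring
  intro t ht
  have hlog : Real.log ((Λ (t + 1)).det / (Λ 1).det)
      = ∑ i ∈ Finset.Icc 1 t, Real.log (1 + x i) := by
    rw [hprod t ht, mul_div_cancel_left₀ _ (hpos 1).det_pos.ne', Real.log_prod]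
    intro i _
    have := (hxb i).1
    positivity
  constructor
  · rw [hlog]
    apply Finset.sum_le_sum
    intro i _
    have h1 : (0 : ℝ) < 1 + x i := by linarith [(hxb i).1]
    linarith [Real.log_le_sub_one_of_pos h1]
  · rw [hlog, Finset.mul_sum]
    apply Finset.sum_le_sum
    intro i _
    exact ep_half_le_log (hxb i).1 (hxb i).2
end

section
/- (Projected dual ascent telescoping bound) Let Y⁰ = 0 and Y^{k} = Proj_{[0,χ]}(Y^{k-1} + η·g_{k-1}) for k = 1,…,K+1, where |g_k| ≤ H for all k and each g_k ≤ c_k + s (with s ≥ 0 fixed). Then -∑_{k=1}^{K} Y^{k}·c_{k} ≤ ∑_{k=1}^{K} Y^k·s + (η/2)·H²·(K+1). More precisely: if g_k = b - V_k and V*_g ≥ b, then -∑_{k=1}^{K} Y^k·(V*_g - V_k) ≤ (η·H²·(K+1))/2. -/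
open Finset

/-- Projection onto the interval `[0, χ]`. -/
noncomputable def projInterval (χ x : ℝ) : ℝ := min (max x 0) χ

lemma projInterval_nonneg (χ x : ℝ) (hχ : 0 < χ) : 0 ≤ projInterval χ x := by
  unfold projInterval
  exact le_min (le_max_right _ _) hχ.le

lemma projInterval_sq_le (χ x : ℝ) (hχ : 0 < χ) :
    (projInterval χ x) ^ 2 ≤ x ^ 2 := by
  have h1 : projInterval χ x ≤ |x| :=
    le_trans (min_le_left _ _) (max_le (le_abs_self x) (abs_nonneg x))
  have h0 : 0 ≤ projInterval χ x := projInterval_nonneg χ x hχ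
  nlinarith [sq_abs x, abs_nonneg x]

/-- Projected dual ascent telescoping bound: with `Y⁰ = 0`,
`Y^k = Proj_{[0,χ]}(Y^{k-1} + η (b - V_{k-1}))`, `|b - V_k| ≤ H` and `V*_g ≥ b`,
`∑_{k=1}^K Y^k (V_k - V*_g) ≤ (η/2) H² (K+1)`, i.e.
`-∑_{k=1}^K Y^k (V*_g - V_k) ≤ (η/2) H² (K+1)`. -/
theorem dual_ascent_telescope (χ η H : ℝ) (K : ℕ) (b Vgstar : ℝ)
    (V : ℕ → ℝ) (Y : ℕ → ℝ)
    (hχ : 0 < χ) (hη : 0 < η) (hH : 0 < H) (hK : 1 ≤ K)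
    (hVb : ∀ k, |b - V k| ≤ H)
    (hVg : b ≤ Vgstar)
    (hY0 : Y 0 = 0)
    (hYrec : ∀ k, Y (k + 1) = projInterval χ (Y k + η * (b - V k))) :
    ∑ k ∈ Finset.Icc 1 K, Y k * (V k - Vgstar) ≤ η / 2 * H ^ 2 * (K + 1) := by
  have hYpos : ∀ k, 0 ≤ Y k := by
    intro k
    cases k with
    | zero => simp [hY0]
    | succ n => rw [hYrec]; exact projInterval_nonneg _ _ hχ
  have key : ∀ n : ℕ, 2 * η * ∑ k ∈ Finset.range n, Y k * (V k - Vgstar)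
      ≤ - (Y n) ^ 2 + η ^ 2 * H ^ 2 * n := by
    intro n
    induction n with
    | zero => simp [hY0]
    | succ n ih =>
      rw [Finset.sum_range_succ]
      have hproj : (Y (n + 1)) ^ 2 ≤ (Y n + η * (b - V n)) ^ 2 := by
        rw [hYrec]; exact projInterval_sq_le _ _ hχ
      have hg : |b - V n| ≤ H := hVb n
      have hg2 : (b - V n) ^ 2 ≤ H ^ 2 := by
        nlinarith [sq_abs (b - V n), abs_nonneg (b - V n)]
      have hyn := hYpos n
      push_cast
      nlinarith [mul_nonneg hyn (sub_nonneg.2 hVg)]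
  have hsum : ∑ k ∈ Finset.Icc 1 K, Y k * (V k - Vgstar)
      = ∑ k ∈ Finset.range (K + 1), Y k * (V k - Vgstar) := by
    rw [Finset.range_eq_Ico, Finset.sum_Ico_eq_sum_range]
    rw [show Finset.Icc 1 K = Finset.Ico 1 (K + 1) by rfl, Finset.sum_Ico_eq_sum_range]
    simp [Finset.sum_range_succ']
    simp [hY0, add_comm]
  have h := key (K + 1)
  have hY2 : 0 ≤ (Y (K + 1)) ^ 2 := sq_nonneg _
  rw [hsum]
  push_cast at h ⊢
  nlinarith
end

section
/- (Performance difference lemma, finite-horizon) For any two policies π, π' and any MDP with horizon H, value functions V_h^π and action-value functions Q_h^π satisfying the Bellman equations, V_1^{π'}(x₁) - V_1^{π}(x₁) = E_{π'}[ ∑_{h=1}^{H} ⟨Q_h^{π}(x_h, ·), π'_h(·|x_h) - π_h(·|x_h)⟩ | x₁ ], where the expectation is over trajectories generated by π'. -/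
open Finset

variable {S A : Type*}

/-- Value function by backward recursion, parameterized by steps-to-go:
`mdpV H P r π t` is the value function at step `h = H + 1 - t`
(so `mdpV H P r π H = V_1^π` and `mdpV H P r π 0 = V_{H+1}^π = 0`). -/
noncomputable def mdpV [Fintype S] [Fintype A]
    (H : ℕ) (P : ℕ → S → A → S → ℝ) (r : ℕ → S → A → ℝ)
    (π : ℕ → S → A → ℝ) : ℕ → S → ℝ
  | 0 => fun _ => 0
  | (t + 1) => fun x => ∑ a, π (H - t) x a *
      (r (H - t) x a + ∑ x', P (H - t) x a x' * mdpV H P r π t x')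

/-- Action-value function at step `h`: `Q_h^π(x,a) = r_h(x,a) + (P_h V_{h+1}^π)(x,a)`. -/
noncomputable def mdpQ [Fintype S] [Fintype A]
    (H : ℕ) (P : ℕ → S → A → S → ℝ) (r : ℕ → S → A → ℝ)
    (π : ℕ → S → A → ℝ) (h : ℕ) (x : S) (a : A) : ℝ :=
  r h x a + ∑ x', P h x a x' * mdpV H P r π (H - h) x'

/-- State-visitation distribution of policy `π` started at `x₁`:
`mdpOcc P x₁ π (h-1)` is the law of `x_h` under `π`. -/
noncomputable def mdpOcc [Fintype S] [Fintype A] [DecidableEq S]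
    (P : ℕ → S → A → S → ℝ) (x₁ : S) (π : ℕ → S → A → ℝ) : ℕ → S → ℝ
  | 0 => fun x => if x = x₁ then 1 else 0
  | (t + 1) => fun x' => ∑ x, ∑ a, mdpOcc P x₁ π t x * π (t + 1) x a * P (t + 1) x a x'

-- pointwise Bellman-difference identity
lemma pd_pointwise [Fintype S] [Fintype A]
    (H : ℕ) (P : ℕ → S → A → S → ℝ) (r : ℕ → S → A → ℝ)
    (π π' : ℕ → S → A → ℝ) (t k : ℕ) (hk : H - t = k + 1) (ht : H - (k+1) = t) (x : S) :
    mdpV H P r π' (t+1) x - mdpV H P r π (t+1) x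
      = (∑ a, (π' (k+1) x a - π (k+1) x a) * mdpQ H P r π (k+1) x a)
        + ∑ a, π' (k+1) x a *
            ∑ x', P (k+1) x a x' * (mdpV H P r π' t x' - mdpV H P r π t x') := by
  simp only [mdpV, mdpQ, hk, ht, ← Finset.sum_sub_distrib, ← Finset.sum_add_distrib]
  refine Finset.sum_congr rfl fun a _ => ?_
  rw [show (∑ x', P (k+1) x a x' * (mdpV H P r π' t x' - mdpV H P r π t x'))
      = (∑ x', P (k+1) x a x' * mdpV H P r π' t x')
        - ∑ x', P (k+1) x a x' * mdpV H P r π t x' by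
    simp [mul_sub, Finset.sum_sub_distrib]]
  ring

lemma pd_step [Fintype S] [Fintype A] [DecidableEq S]
    (H : ℕ) (P : ℕ → S → A → S → ℝ) (r : ℕ → S → A → ℝ)
    (π π' : ℕ → S → A → ℝ) (x₁ : S) (t : ℕ) (ht : t < H) :
    ∑ x, mdpOcc P x₁ π' (H - (t+1)) x * (mdpV H P r π' (t+1) x - mdpV H P r π (t+1) x)
      = (∑ x, mdpOcc P x₁ π' (H - t) x * (mdpV H P r π' t x - mdpV H P r π t x))
        + ∑ x, mdpOcc P x₁ π' (H - (t+1)) x *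
            ∑ a, (π' (H - t) x a - π (H - t) x a) * mdpQ H P r π (H - t) x a := by
  obtain ⟨k, hk⟩ : ∃ k, H - t = k + 1 := ⟨H - t - 1, by omega⟩
  have h1 : H - (t+1) = k := by omega
  have h2 : H - (k+1) = t := by omega
  rw [hk, h1]
  have expand := pd_pointwise (A := A) H P r π π' t k hk h2
  have transport : ∀ F : S → ℝ,
      ∑ x, mdpOcc P x₁ π' k x * ∑ a, π' (k+1) x a * ∑ x', P (k+1) x a x' * F x'
        = ∑ x', mdpOcc P x₁ π' (k+1) x' * F x' := by
    have e1 : ∀ g : S → A → S → ℝ, ∑ x, ∑ a, ∑ x', g x a x' = ∑ x', ∑ x, ∑ a, g x a x' := by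
      intro g
      have h : ∀ x, ∑ a, ∑ x', g x a x' = ∑ x', ∑ a, g x a x' := fun x => Finset.sum_comm
      simp_rw [h]
      exact Finset.sum_comm
    intro F
    calc ∑ x, mdpOcc P x₁ π' k x * ∑ a, π' (k+1) x a * ∑ x', P (k+1) x a x' * F x'
        = ∑ x, ∑ a, ∑ x', mdpOcc P x₁ π' k x * (π' (k+1) x a * (P (k+1) x a x' * F x')) := by
          simp only [Finset.mul_sum]
      _ = ∑ x', ∑ x, ∑ a, mdpOcc P x₁ π' k x * (π' (k+1) x a * (P (k+1) x a x' * F x')) :=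
          e1 _
      _ = ∑ x', (∑ x, ∑ a, mdpOcc P x₁ π' k x * π' (k+1) x a * P (k+1) x a x') * F x' := by
          refine Finset.sum_congr rfl fun x' _ => ?_
          rw [Finset.sum_mul]
          refine Finset.sum_congr rfl fun x _ => ?_
          rw [Finset.sum_mul]
          exact Finset.sum_congr rfl fun a _ => by ring
      _ = ∑ x', mdpOcc P x₁ π' (k+1) x' * F x' := by simp only [mdpOcc]
  simp only [expand, mul_add, Finset.sum_add_distrib,
    transport fun x' => mdpV H P r π' t x' - mdpV H P r π t x']
  rw [add_comm]

lemma pd_aux [Fintype S] [Fintype A] [DecidableEq S]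
    (H : ℕ) (P : ℕ → S → A → S → ℝ) (r : ℕ → S → A → ℝ)
    (π π' : ℕ → S → A → ℝ) (x₁ : S) :
    ∀ t, t ≤ H →
    ∑ x, mdpOcc P x₁ π' (H - t) x * (mdpV H P r π' t x - mdpV H P r π t x)
      = ∑ j ∈ Finset.range t, ∑ x, mdpOcc P x₁ π' (H - (j+1)) x *
          ∑ a, (π' (H - j) x a - π (H - j) x a) * mdpQ H P r π (H - j) x a := by
  intro t
  induction t with
  | zero => simp [mdpV]
  | succ t ih =>
    intro h
    rw [Finset.sum_range_succ, ← ih (by omega), pd_step H P r π π' x₁ t (by omega)]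

/-- Performance difference lemma (finite horizon):
`V_1^{π'}(x₁) - V_1^{π}(x₁)
  = E_{π'}[ ∑_{h=1}^H ⟨Q_h^π(x_h,·), π'_h(·|x_h) - π_h(·|x_h)⟩ ]`,
where the expectation over trajectories of `π'` is written via the visitation
distributions `mdpOcc`. -/
theorem performance_difference [Fintype S] [Fintype A] [DecidableEq S]
    (H : ℕ) (hH : 1 ≤ H)
    (P : ℕ → S → A → S → ℝ) (r : ℕ → S → A → ℝ)
    (π π' : ℕ → S → A → ℝ) (x₁ : S)
    (hP : ∀ h x a, (∀ x', 0 ≤ P h x a x') ∧ ∑ x', P h x a x' = 1)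
    (hr : ∀ h x a, r h x a ∈ Set.Icc (0 : ℝ) 1)
    (hπ : ∀ h x, (∀ a, 0 ≤ π h x a) ∧ ∑ a, π h x a = 1)
    (hπ' : ∀ h x, (∀ a, 0 ≤ π' h x a) ∧ ∑ a, π' h x a = 1) :
    mdpV H P r π' H x₁ - mdpV H P r π H x₁
      = ∑ h ∈ Finset.Icc 1 H, ∑ x, mdpOcc P x₁ π' (h - 1) x *
          ∑ a, (π' h x a - π h x a) * mdpQ H P r π h x a := by
  have main := pd_aux H P r π π' x₁ H le_rfl
  simp only [Nat.sub_self, mdpOcc] at main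
  have lhs : ∑ x, (if x = x₁ then (1:ℝ) else 0) * (mdpV H P r π' H x - mdpV H P r π H x)
      = mdpV H P r π' H x₁ - mdpV H P r π H x₁ := by
    simp [ite_mul]
  rw [lhs] at main
  rw [main]
  -- reindex: range H with j ↦ H - j  vs  Icc 1 H with h
  rw [← Finset.sum_range_reflect, show Finset.Icc 1 H = Finset.Ico 1 (H+1) from
    (Finset.Ico_add_one_right_eq_Icc 1 H).symm, Finset.sum_Ico_eq_sum_range]
  simp only [Nat.add_sub_cancel]
  refine Finset.sum_congr rfl fun j hj => ?_
  rw [Finset.mem_range] at hj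
  have e1 : H - (H - 1 - j) = 1 + j := by omega
  have e2 : H - (H - 1 - j + 1) = 1 + j - 1 := by omega
  rw [e1, e2]
end

section
/- (Optimism of truncated estimated Q-functions) Suppose Q̂, r̂ : S×A → ℝ and V̂ : S → ℝ, P̂ a sub-stochastic kernel, and Γ : S×A → ℝ≥0 satisfy for all (x,a): |r̂(x,a) - r(x,a)| ≤ Γ(x,a) and |∑_{x'} P̂(x'|x,a)V̂(x') - ∑_{x'} P(x'|x,a)V̂(x')| ≤ Γ(x,a). Define Q(x,a) = min( r̂(x,a) + ∑_{x'} P̂(x'|x,a)V̂(x') + 2Γ(x,a), H-h+1 )⁺ and assume r(x,a) + ∑_{x'}P(x'|x,a)V̂(x') ≤ H-h+1 and r(x,a) + ∑_{x'}P(x'|x,a)V̂(x') ≥ 0. Then the prediction error ι(x,a) = r(x,a) + ∑_{x'} P(x'|x,a)V̂(x') - Q(x,a) satisfies -4Γ(x,a) ≤ ι(x,a) ≤ 0 for all (x,a). -/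
open Finset

/-- Optimism of truncated estimated Q-functions: if the reward and transition
estimates are within a bonus `Γ` of the truth, and
`Q(x,a) = max(min(r̂ + P̂V̂ + 2Γ, H-h+1), 0)`, then the prediction error
`ι = r + PV̂ - Q` satisfies `-4Γ ≤ ι ≤ 0`. -/
theorem optimism_truncated_Q {S A : Type*} [Fintype S] [Fintype A]
    (H h : ℕ) (hh1 : 1 ≤ h) (hhH : h ≤ H)
    (r rhat : S → A → ℝ) (Vhat : S → ℝ)
    (P Phat : S → A → S → ℝ) (Γ : S → A → ℝ) (Q ι : S → A → ℝ)
    (hr : ∀ x a, r x a ∈ Set.Icc (0 : ℝ) 1)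
    (hP : ∀ x a, (∀ x', 0 ≤ P x a x') ∧ ∑ x', P x a x' = 1)
    (hPhat : ∀ x a x', 0 ≤ Phat x a x')
    (hVhat : ∀ x, Vhat x ∈ Set.Icc (0 : ℝ) (H : ℝ))
    (hΓ : ∀ x a, 0 ≤ Γ x a)
    (hrerr : ∀ x a, |rhat x a - r x a| ≤ Γ x a)
    (hPerr : ∀ x a,
      |(∑ x', Phat x a x' * Vhat x') - ∑ x', P x a x' * Vhat x'| ≤ Γ x a)
    (hQ : ∀ x a, Q x a =
      max (min (rhat x a + (∑ x', Phat x a x' * Vhat x') + 2 * Γ x a)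
        ((H : ℝ) - h + 1)) 0)
    (hub : ∀ x a, r x a + (∑ x', P x a x' * Vhat x') ≤ (H : ℝ) - h + 1)
    (hlb : ∀ x a, 0 ≤ r x a + (∑ x', P x a x' * Vhat x'))
    (hι : ∀ x a, ι x a = r x a + (∑ x', P x a x' * Vhat x') - Q x a) :
    ∀ x a, -(4 * Γ x a) ≤ ι x a ∧ ι x a ≤ 0 := by
  intro x a
  have hre := hrerr x a
  have hpe := hPerr x a
  have hg := hΓ x a
  have hub' := hub x a
  have hlb' := hlb x a
  set T := r x a + (∑ x', P x a x' * Vhat x') with hT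
  have h1 : T ≤ rhat x a + (∑ x', Phat x a x' * Vhat x') + 2 * Γ x a := by
    have := abs_le.1 hre
    have := abs_le.1 hpe
    simp only [hT]; linarith [this.1, (abs_le.1 hre).1]
  have h2 : rhat x a + (∑ x', Phat x a x' * Vhat x') + 2 * Γ x a ≤ T + 4 * Γ x a := by
    have := abs_le.1 hre
    have := abs_le.1 hpe
    simp only [hT]; linarith [this.2, (abs_le.1 hre).2]
  have hQlb : T ≤ Q x a := by
    rw [hQ x a]
    exact le_max_of_le_left (le_min h1 hub')
  have hQub : Q x a ≤ T + 4 * Γ x a := by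
    rw [hQ x a]
    apply max_le
    · exact le_trans (min_le_left _ _) h2
    · linarith
  rw [hι x a]
  constructor <;> linarith
end
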